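/- Let $\rho, \mu$ be compactly supported probability measures on $\mathbb{R}^d$ and suppose the quadratic-cost ($c(x,y)=\|x-y\|^2$) optimal transport from $\rho$ to each of $\mu_0$ and $\mu_1$ is given by maps $T_0$ and $T_1$. For $\varepsilon > 0$ define $c_\varepsilon((x_0,y_0),(x_1,y_1)) = \|x_0 - x_1\|^2 + \varepsilon\|y_0 - y_1\|^2$ and let $\tau_{c_\varepsilon}(\gamma_0,\gamma_1)$ be the optimal transport cost between $\gamma_i = (\mathrm{id}, T_i)_\#\rho$ for cost $c_\varepsilon$. Then $\frac{1}{\varepsilon}\tau_{c_\varepsilon}(\gamma_0, \gamma_1) \to \|T_0 - T_1\|_{L^2(\rho)}^2$ as $\varepsilon \to 0$. -/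

import Mathlib

open MeasureTheory ENNReal Filter

/-- The topological support of a measure: points all of whose open neighbourhoods
have positive measure. -/
def msupport {α : Type*} [TopologicalSpace α] [MeasurableSpace α] (μ : Measure α) : Set α :=
  {x | ∀ U : Set α, IsOpen U → x ∈ U → μ U ≠ 0}

/-- The `c_ε`-transport cost between the plans `γ₀ = (id, T₀)_# ρ` and `γ₁ = (id, T₁)_# ρ`,
for `c_ε((x₀,y₀),(x₁,y₁)) = ‖x₀ - x₁‖² + ε ‖y₀ - y₁‖²`. -/
noncomputable def tauEps {d : ℕ} (ρ : Measure (EuclideanSpace ℝ (Fin d)))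
    (T₀ T₁ : EuclideanSpace ℝ (Fin d) → EuclideanSpace ℝ (Fin d)) (ε : ℝ) : ℝ≥0∞ :=
  ⨅ η ∈ {η : Measure ((EuclideanSpace ℝ (Fin d) × EuclideanSpace ℝ (Fin d)) ×
      (EuclideanSpace ℝ (Fin d) × EuclideanSpace ℝ (Fin d))) |
      η.fst = Measure.map (fun x => (x, T₀ x)) ρ ∧
      η.snd = Measure.map (fun x => (x, T₁ x)) ρ},
    ∫⁻ q, ENNReal.ofReal (dist q.1.1 q.2.1 ^ 2 + ε * dist q.1.2 q.2.2 ^ 2) ∂η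

section Aux

variable {α : Type*} [TopologicalSpace α] [MeasurableSpace α]

lemma isOpen_msupport_compl (μ : Measure α) : IsOpen (msupport μ)ᶜ := by
  refine isOpen_iff_forall_mem_open.2 fun x hx => ?_
  simp only [Set.mem_compl_iff, msupport, Set.mem_setOf_eq] at hx
  push_neg at hx
  obtain ⟨U, hU, hxU, hμU⟩ := hx
  refine ⟨U, fun y hy => ?_, hU, hxU⟩
  simp only [Set.mem_compl_iff, msupport, Set.mem_setOf_eq]
  push_neg
  exact ⟨U, hU, hy, hμU⟩

lemma measure_msupport_compl [SecondCountableTopology α] (μ : Measure α) :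
    μ (msupport μ)ᶜ = 0 := by
  obtain ⟨B, hBc, -, hB⟩ := TopologicalSpace.exists_countable_basis α
  have hsub : (msupport μ)ᶜ ⊆ ⋃₀ {b ∈ B | μ b = 0} := by
    intro x hx
    simp only [Set.mem_compl_iff, msupport, Set.mem_setOf_eq] at hx
    push_neg at hx
    obtain ⟨U, hU, hxU, hμU⟩ := hx
    obtain ⟨v, hvB, hxv, hvU⟩ := hB.exists_subset_of_mem_open hxU hU
    exact ⟨v, ⟨hvB, le_antisymm (hμU ▸ measure_mono hvU) (by simp)⟩, hxv⟩
  refine measure_mono_null hsub ?_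
  rw [measure_sUnion_null_iff (hBc.mono (Set.sep_subset _ _))]
  exact fun t ht => ht.2

end Aux

section Euclid

variable {d : ℕ}

local notation "E" => EuclideanSpace ℝ (Fin d)

/-- pointwise conversion between `ofReal (dist a b ^ 2)` and the `ℝ≥0∞`-valued
squared norm of the difference. -/
lemma nsq (a b : E) : ENNReal.ofReal (dist a b ^ 2) = (‖a - b‖₊ : ℝ≥0∞) ^ (2 : ℝ) := by
  rw [dist_eq_norm, ENNReal.ofReal_pow (norm_nonneg _), ofReal_norm, enorm_eq_nnnorm,
    ← ENNReal.rpow_natCast]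
  norm_num

lemma ofReal_sq {x : ℝ} (hx : 0 ≤ x) :
    ENNReal.ofReal (x ^ 2) = ENNReal.ofReal x ^ (2 : ℝ) := by
  rw [ENNReal.ofReal_pow hx, ← ENNReal.rpow_natCast]
  norm_num

lemma elp_sq {β : Type*} [MeasurableSpace β] (θ : Measure β) (f : β → E) :
    eLpNorm f 2 θ ^ (2 : ℝ) = ∫⁻ a, (‖f a‖₊ : ℝ≥0∞) ^ (2 : ℝ) ∂θ := by
  rw [eLpNorm_eq_lintegral_rpow_enorm_toReal (by norm_num) (by norm_num)]
  simp only [enorm_eq_nnnorm]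
  rw [← ENNReal.rpow_mul]
  norm_num

lemma elp_of_sq_eq {a b : ℝ≥0∞} (h : a ^ (2 : ℝ) = b ^ (2 : ℝ)) : a = b := by
  have h2 : (a ^ (2 : ℝ)) ^ ((2 : ℝ)⁻¹) = (b ^ (2 : ℝ)) ^ ((2 : ℝ)⁻¹) := by rw [h]
  rwa [← ENNReal.rpow_mul, ← ENNReal.rpow_mul, mul_inv_cancel₀ (by norm_num : (2:ℝ) ≠ 0),
    ENNReal.rpow_one, ENNReal.rpow_one] at h2

/-- a.e. the first pair coordinate of a measure with first marginal a graph measure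
lies on the graph. -/
lemma ae_graph_fst (ρ : Measure E) (T : E → E) (hm : Measurable T)
    (η : Measure ((E × E) × (E × E)))
    (hη : η.fst = Measure.map (fun x => (x, T x)) ρ) :
    ∀ᵐ q ∂η, q.1.2 = T q.1.1 := by
  have hS : MeasurableSet {p : E × E | ¬ p.2 = T p.1} := by
    have h : {p : E × E | p.2 = T p.1} = (fun p : E × E => p.2 - T p.1) ⁻¹' {0} := by
      ext p; simp [sub_eq_zero]
    have : MeasurableSet {p : E × E | p.2 = T p.1} := by
      rw [h]; exact (measurable_snd.sub (hm.comp measurable_fst)) (measurableSet_singleton 0)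
    exact this.compl
  rw [ae_iff]
  have hset : {q : (E × E) × (E × E) | ¬ q.1.2 = T q.1.1}
      = Prod.fst ⁻¹' {p : E × E | ¬ p.2 = T p.1} := rfl
  rw [hset, ← Measure.map_apply measurable_fst hS,
    show Measure.map Prod.fst η = η.fst from rfl, hη,
    Measure.map_apply (measurable_id'.prodMk hm) hS]
  have : (fun x => (x, T x)) ⁻¹' {p : E × E | ¬ p.2 = T p.1} = ∅ := by
    ext x; simp
  rw [this, measure_empty]

lemma ae_graph_snd (ρ : Measure E) (T : E → E) (hm : Measurable T)
    (η : Measure ((E × E) × (E × E)))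
    (hη : η.snd = Measure.map (fun x => (x, T x)) ρ) :
    ∀ᵐ q ∂η, q.2.2 = T q.2.1 := by
  have hS : MeasurableSet {p : E × E | ¬ p.2 = T p.1} := by
    have h : {p : E × E | p.2 = T p.1} = (fun p : E × E => p.2 - T p.1) ⁻¹' {0} := by
      ext p; simp [sub_eq_zero]
    have : MeasurableSet {p : E × E | p.2 = T p.1} := by
      rw [h]; exact (measurable_snd.sub (hm.comp measurable_fst)) (measurableSet_singleton 0)
    exact this.compl
  rw [ae_iff]
  have hset : {q : (E × E) × (E × E) | ¬ q.2.2 = T q.2.1}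
      = Prod.snd ⁻¹' {p : E × E | ¬ p.2 = T p.1} := rfl
  rw [hset, ← Measure.map_apply measurable_snd hS,
    show Measure.map Prod.snd η = η.snd from rfl, hη,
    Measure.map_apply (measurable_id'.prodMk hm) hS]
  have : (fun x => (x, T x)) ⁻¹' {p : E × E | ¬ p.2 = T p.1} = ∅ := by
    ext x; simp
  rw [this, measure_empty]

lemma marg_fst (ρ : Measure E) (T : E → E) (hm : Measurable T)
    (η : Measure ((E × E) × (E × E)))
    (hη : η.fst = Measure.map (fun x => (x, T x)) ρ)
    (f : E → ℝ≥0∞) (hf : Measurable f) :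
    ∫⁻ q, f q.1.1 ∂η = ∫⁻ x, f x ∂ρ := by
  have h1 : ∫⁻ q, f q.1.1 ∂η = ∫⁻ p, f p.1 ∂(Measure.map Prod.fst η) :=
    (lintegral_map (hf.comp measurable_fst) measurable_fst).symm
  rw [h1, show Measure.map Prod.fst η = η.fst from rfl, hη]
  exact lintegral_map (f := fun p : EuclideanSpace ℝ (Fin d) × EuclideanSpace ℝ (Fin d) => f p.1)
    (hf.comp measurable_fst) (measurable_id'.prodMk hm)

lemma marg_snd (ρ : Measure E) (T : E → E) (hm : Measurable T)
    (η : Measure ((E × E) × (E × E)))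
    (hη : η.snd = Measure.map (fun x => (x, T x)) ρ)
    (f : E → ℝ≥0∞) (hf : Measurable f) :
    ∫⁻ q, f q.2.1 ∂η = ∫⁻ x, f x ∂ρ := by
  have h1 : ∫⁻ q, f q.2.1 ∂η = ∫⁻ p, f p.1 ∂(Measure.map Prod.snd η) :=
    (lintegral_map (hf.comp measurable_fst) measurable_snd).symm
  rw [h1, show Measure.map Prod.snd η = η.snd from rfl, hη]
  exact lintegral_map (f := fun p : EuclideanSpace ℝ (Fin d) × EuclideanSpace ℝ (Fin d) => f p.1)
    (hf.comp measurable_fst) (measurable_id'.prodMk hm)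

lemma ae_norm_le (ρ μ : Measure E) [IsProbabilityMeasure μ]
    (hc : IsCompact (msupport μ)) (T : E → E) (hm : Measurable T)
    (hp : Measure.map T ρ = μ) : ∃ R : ℝ, 0 ≤ R ∧ ∀ᵐ x ∂ρ, ‖T x‖ ≤ R := by
  obtain ⟨r, hr⟩ := hc.isBounded.subset_closedBall 0
  refine ⟨max r 0, le_max_right _ _, ?_⟩
  have hmeas : MeasurableSet (msupport μ)ᶜ := (isOpen_msupport_compl μ).measurableSet
  have h0 : ρ (T ⁻¹' (msupport μ)ᶜ) = 0 := by
    rw [← Measure.map_apply hm hmeas, hp]; exact measure_msupport_compl μ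
  have hae : ∀ᵐ x ∂ρ, T x ∈ msupport μ := by
    rw [ae_iff]
    exact h0
  filter_upwards [hae] with x hx
  have := hr hx
  simp only [Metric.mem_closedBall, dist_zero_right] at this
  exact this.trans (le_max_left _ _)


lemma tau_upper (ρ : Measure E) [IsProbabilityMeasure ρ] (T₀ T₁ : E → E)
    (hm₀ : Measurable T₀) (hm₁ : Measurable T₁) {ε : ℝ} (hε : 0 < ε) :
    tauEps ρ T₀ T₁ ε ≤ ENNReal.ofReal ε * ∫⁻ x, ENNReal.ofReal (dist (T₀ x) (T₁ x) ^ 2) ∂ρ := by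
  have hbigm : Measurable (fun x : E => ((x, T₀ x), (x, T₁ x))) :=
    (measurable_id'.prodMk hm₀).prodMk (measurable_id'.prodMk hm₁)
  have hcostm : Measurable fun q : (E × E) × (E × E) =>
      ENNReal.ofReal (dist q.1.1 q.2.1 ^ 2 + ε * dist q.1.2 q.2.2 ^ 2) :=
    (((measurable_fst.fst.dist measurable_snd.fst).pow_const 2).add
      (((measurable_fst.snd.dist measurable_snd.snd).pow_const 2).const_mul ε)).ennreal_ofReal
  have hmem : Measure.map (fun x : E => ((x, T₀ x), (x, T₁ x))) ρ ∈
      {η : Measure ((E × E) × (E × E)) |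
        η.fst = Measure.map (fun x => (x, T₀ x)) ρ ∧
        η.snd = Measure.map (fun x => (x, T₁ x)) ρ} := by
    constructor
    · show (Measure.map (fun x : E => ((x, T₀ x), (x, T₁ x))) ρ).fst = _
      rw [show (Measure.map (fun x : E => ((x, T₀ x), (x, T₁ x))) ρ).fst
          = Measure.map Prod.fst (Measure.map (fun x : E => ((x, T₀ x), (x, T₁ x))) ρ) from rfl,
        Measure.map_map measurable_fst hbigm]
      rfl
    · show (Measure.map (fun x : E => ((x, T₀ x), (x, T₁ x))) ρ).snd = _
      rw [show (Measure.map (fun x : E => ((x, T₀ x), (x, T₁ x))) ρ).snd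
          = Measure.map Prod.snd (Measure.map (fun x : E => ((x, T₀ x), (x, T₁ x))) ρ) from rfl,
        Measure.map_map measurable_snd hbigm]
      rfl
  refine le_trans (iInf₂_le _ hmem) ?_
  rw [lintegral_map hcostm hbigm]
  have hpt : ∀ x : E, ENNReal.ofReal
      (dist (((x, T₀ x), (x, T₁ x)) : (E × E) × (E × E)).1.1 ((x, T₀ x), (x, T₁ x)).2.1 ^ 2
        + ε * dist (((x, T₀ x), (x, T₁ x)) : (E × E) × (E × E)).1.2 ((x, T₀ x), (x, T₁ x)).2.2 ^ 2)
      = ENNReal.ofReal ε * ENNReal.ofReal (dist (T₀ x) (T₁ x) ^ 2) := by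
    intro x
    show ENNReal.ofReal (dist x x ^ 2 + ε * dist (T₀ x) (T₁ x) ^ 2) = _
    rw [dist_self, zero_pow (two_ne_zero), zero_add, ENNReal.ofReal_mul hε.le]
  simp_rw [hpt]
  rw [lintegral_const_mul' _ _ ENNReal.ofReal_ne_top]

lemma tau_lower (ρ : Measure E) [IsProbabilityMeasure ρ] (T₀ T₁ : E → E)
    (hm₀ : Measurable T₀) (hm₁ : Measurable T₁) (hT₁2 : MemLp T₁ 2 ρ)
    (hLtop : (∫⁻ x, ENNReal.ofReal (dist (T₀ x) (T₁ x) ^ 2) ∂ρ) ≠ ⊤)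
    {δ : ℝ} (hδ : 0 < δ)
    (hδle : δ ≤ Real.sqrt (∫⁻ x, ENNReal.ofReal (dist (T₀ x) (T₁ x) ^ 2) ∂ρ).toReal) :
    ∃ ε₀ : ℝ, 0 < ε₀ ∧ ∀ ε : ℝ, 0 < ε → ε ≤ ε₀ →
      ENNReal.ofReal ε * ENNReal.ofReal
        ((Real.sqrt (∫⁻ x, ENNReal.ofReal (dist (T₀ x) (T₁ x) ^ 2) ∂ρ).toReal - δ) ^ 2)
        ≤ tauEps ρ T₀ T₁ ε := by
  set Lr : ℝ := (∫⁻ x, ENNReal.ofReal (dist (T₀ x) (T₁ x) ^ 2) ∂ρ).toReal with hLrdef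
  have hLr0 : 0 ≤ Lr := ENNReal.toReal_nonneg
  set sL : ℝ := Real.sqrt Lr with hsLdef
  have hsL0 : 0 ≤ sL := Real.sqrt_nonneg _
  have hLofReal : ENNReal.ofReal Lr = ∫⁻ x, ENNReal.ofReal (dist (T₀ x) (T₁ x) ^ 2) ∂ρ := by
    rw [hLrdef]; exact ENNReal.ofReal_toReal hLtop
  -- continuous compactly supported approximation of T₁ in L²(ρ)
  obtain ⟨g, hgcs, hgsub, hgc, -⟩ := hT₁2.exists_hasCompactSupport_eLpNorm_sub_le
    (by norm_num) (ε := ENNReal.ofReal (δ / 4)) (ENNReal.ofReal_pos.2 (by linarith)).ne'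
  obtain ⟨M, hM0, hMb⟩ : ∃ M : ℝ, 0 ≤ M ∧ ∀ x, ‖g x‖ ≤ M := by
    obtain ⟨C, hC⟩ := (hgcs.isCompact.image hgc).isBounded.exists_norm_le
    refine ⟨max C 0, le_max_right _ _, fun x => ?_⟩
    by_cases hx : x ∈ tsupport g
    · exact (hC _ (Set.mem_image_of_mem g hx)).trans (le_max_left _ _)
    · rw [image_eq_zero_of_notMem_tsupport hx, norm_zero]; exact le_max_right _ _
  obtain ⟨γ, hγ0, hγ⟩ := Metric.uniformContinuous_iff.1
    (hgcs.uniformContinuous_of_continuous hgc) (δ / 4) (by linarith)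
  set c2 : ℝ := 4 * (M + 1) ^ 2 / γ ^ 2 with hc2def
  have hc20 : 0 ≤ c2 := by positivity
  refine ⟨γ ^ 2 * δ ^ 2 / (64 * (M + 1) ^ 2 * (Lr + 1)), by positivity, fun ε hε hεle => ?_⟩
  rw [tauEps]
  refine le_iInf₂ fun η hη => ?_
  obtain ⟨hmf, hms⟩ := hη
  -- marginals and basic facts
  have hη1 : η Set.univ = 1 := by
    have h1 : Measure.map Prod.fst η Set.univ = η Set.univ := by
      rw [Measure.map_apply measurable_fst MeasurableSet.univ, Set.preimage_univ]
    rw [← h1, show Measure.map Prod.fst η = η.fst from rfl, hmf,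
      Measure.map_apply (measurable_id'.prodMk hm₀) MeasurableSet.univ, Set.preimage_univ,
      measure_univ]
  set A := ∫⁻ q, ENNReal.ofReal (dist q.1.1 q.2.1 ^ 2) ∂η with hAdef
  set B := ∫⁻ q, ENNReal.ofReal (dist q.1.2 q.2.2 ^ 2) ∂η with hBdef
  have mA : Measurable fun q : (E × E) × (E × E) => ENNReal.ofReal (dist q.1.1 q.2.1 ^ 2) :=
    ((measurable_fst.fst.dist measurable_snd.fst).pow_const 2).ennreal_ofReal
  have cost_eq : ∫⁻ q, ENNReal.ofReal (dist q.1.1 q.2.1 ^ 2 + ε * dist q.1.2 q.2.2 ^ 2) ∂η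
      = A + ENNReal.ofReal ε * B := by
    have hpt : ∀ q : (E × E) × (E × E),
        ENNReal.ofReal (dist q.1.1 q.2.1 ^ 2 + ε * dist q.1.2 q.2.2 ^ 2)
        = ENNReal.ofReal (dist q.1.1 q.2.1 ^ 2)
          + ENNReal.ofReal ε * ENNReal.ofReal (dist q.1.2 q.2.2 ^ 2) := fun q => by
      rw [ENNReal.ofReal_add (by positivity) (by positivity), ENNReal.ofReal_mul hε.le]
    simp_rw [hpt]
    rw [lintegral_add_left mA, lintegral_const_mul' _ _ ENNReal.ofReal_ne_top, hAdef, hBdef]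
  rw [cost_eq]
  by_cases hcase : ENNReal.ofReal ε * ENNReal.ofReal ((sL - δ) ^ 2) ≤ A
  · exact hcase.trans le_self_add
  push_neg at hcase
  have hKLr : (sL - δ) ^ 2 ≤ Lr := by
    have h1 : 0 ≤ sL - δ := by linarith
    calc (sL - δ) ^ 2 ≤ sL ^ 2 := pow_le_pow_left₀ h1 (by linarith) 2
    _ = Lr := Real.sq_sqrt hLr0
  have hAle : A ≤ ENNReal.ofReal (ε * (Lr + 1)) := by
    refine hcase.le.trans ?_
    rw [← ENNReal.ofReal_mul hε.le]
    exact ENNReal.ofReal_le_ofReal (by nlinarith)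
  -- a.e. graph structure
  have hge₀ := ae_graph_fst ρ T₀ hm₀ η hmf
  have hge₁ := ae_graph_snd ρ T₁ hm₁ η hms
  -- the six L² norms
  set n1 := eLpNorm (fun q : (E × E) × (E × E) => T₀ q.1.1 - T₁ q.1.1) 2 η with hn1def
  set n2 := eLpNorm (fun q : (E × E) × (E × E) => T₀ q.1.1 - T₁ q.2.1) 2 η with hn2def
  set n3 := eLpNorm (fun q : (E × E) × (E × E) => T₁ q.2.1 - T₁ q.1.1) 2 η with hn3def
  set n4 := eLpNorm (fun q : (E × E) × (E × E) => T₁ q.2.1 - g q.2.1) 2 η with hn4def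
  set n5 := eLpNorm (fun q : (E × E) × (E × E) => g q.2.1 - g q.1.1) 2 η with hn5def
  set n6 := eLpNorm (fun q : (E × E) × (E × E) => g q.1.1 - T₁ q.1.1) 2 η with hn6def
  have mgm : Measurable g := hgc.measurable
  have mq11 : Measurable fun q : (E × E) × (E × E) => q.1.1 := measurable_fst.fst
  have mq21 : Measurable fun q : (E × E) × (E × E) => q.2.1 := measurable_snd.fst
  -- value of n1
  have e1 : n1 ^ (2 : ℝ) = ENNReal.ofReal Lr := by
    rw [hn1def, elp_sq]
    have h := marg_fst ρ T₀ hm₀ η hmf (fun x => (‖T₀ x - T₁ x‖₊ : ℝ≥0∞) ^ (2 : ℝ))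
      ((hm₀.sub hm₁).enorm.pow_const _)
    refine h.trans ?_
    rw [hLofReal]
    exact lintegral_congr fun x => (nsq _ _).symm
  have hsLsq : (ENNReal.ofReal sL) ^ (2 : ℝ) = ENNReal.ofReal Lr := by
    rw [← ofReal_sq hsL0, hsLdef, Real.sq_sqrt hLr0]
  have hn1 : n1 = ENNReal.ofReal sL := elp_of_sq_eq (e1.trans hsLsq.symm)
  -- value of n2 squared
  have e2 : n2 ^ (2 : ℝ) = B := by
    rw [hn2def, elp_sq, hBdef]
    refine lintegral_congr_ae ?_
    filter_upwards [hge₀, hge₁] with q h1 h2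
    rw [h1, h2, nsq]
  -- n4 and n6
  have e4 : n4 = eLpNorm (T₁ - g) 2 ρ := by
    refine elp_of_sq_eq ?_
    rw [hn4def, elp_sq, elp_sq]
    exact marg_snd ρ T₁ hm₁ η hms (fun x => (‖T₁ x - g x‖₊ : ℝ≥0∞) ^ (2 : ℝ))
      ((hm₁.sub mgm).enorm.pow_const _)
  have e6 : n6 = eLpNorm (T₁ - g) 2 ρ := by
    refine elp_of_sq_eq ?_
    rw [hn6def, elp_sq, elp_sq]
    have h := marg_fst ρ T₀ hm₀ η hmf (fun x => (‖g x - T₁ x‖₊ : ℝ≥0∞) ^ (2 : ℝ))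
      ((mgm.sub hm₁).enorm.pow_const _)
    refine h.trans (lintegral_congr fun x => ?_)
    rw [show (T₁ - g) x = -(g x - T₁ x) from by simp, nnnorm_neg]
  have hn4 : n4 ≤ ENNReal.ofReal (δ / 4) := e4.trans_le hgsub
  have hn6 : n6 ≤ ENNReal.ofReal (δ / 4) := e6.trans_le hgsub
  -- n5 bound
  have hpt5 : ∀ q : (E × E) × (E × E), (‖g q.2.1 - g q.1.1‖₊ : ℝ≥0∞) ^ (2 : ℝ)
      ≤ ENNReal.ofReal ((δ / 4) ^ 2)
        + ENNReal.ofReal c2 * ENNReal.ofReal (dist q.1.1 q.2.1 ^ 2) := by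
    intro q
    rw [← nsq]
    rcases lt_or_ge (dist q.1.1 q.2.1) γ with h | h
    · refine le_trans ?_ le_self_add
      apply ENNReal.ofReal_le_ofReal
      have hd : dist (g q.2.1) (g q.1.1) < δ / 4 := hγ (by rw [dist_comm]; exact h)
      exact pow_le_pow_left₀ dist_nonneg hd.le 2
    · refine le_trans ?_ le_add_self
      rw [← ENNReal.ofReal_mul hc20]
      apply ENNReal.ofReal_le_ofReal
      have hd : dist (g q.2.1) (g q.1.1) ≤ 2 * (M + 1) := by
        have h1 := dist_le_norm_add_norm (g q.2.1) (g q.1.1)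
        have h2 := hMb q.2.1
        have h3 := hMb q.1.1
        linarith
      have h1 : (1 : ℝ) ≤ dist q.1.1 q.2.1 / γ := (one_le_div hγ0).2 h
      have heq : c2 * dist q.1.1 q.2.1 ^ 2 = (2 * (M + 1) * (dist q.1.1 q.2.1 / γ)) ^ 2 := by
        rw [hc2def]; field_simp; ring
      rw [heq]
      have h2 : dist (g q.2.1) (g q.1.1) ≤ 2 * (M + 1) * (dist q.1.1 q.2.1 / γ) := by
        nlinarith
      exact pow_le_pow_left₀ dist_nonneg h2 2
  have hn5sq : n5 ^ (2 : ℝ) ≤ ENNReal.ofReal ((δ / 4) ^ 2) + ENNReal.ofReal c2 * A := by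
    rw [hn5def, elp_sq]
    refine le_trans (lintegral_mono hpt5) ?_
    rw [lintegral_add_left measurable_const, lintegral_const_mul' _ _ ENNReal.ofReal_ne_top,
      lintegral_const, hη1, mul_one, hAdef]
  have hc2A : ENNReal.ofReal c2 * A ≤ ENNReal.ofReal ((δ / 4) ^ 2) := by
    refine le_trans (mul_le_mul_right hAle _) ?_
    rw [← ENNReal.ofReal_mul hc20]
    apply ENNReal.ofReal_le_ofReal
    have hkey : c2 * (γ ^ 2 * δ ^ 2 / (64 * (M + 1) ^ 2 * (Lr + 1)) * (Lr + 1))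
        = (δ / 4) ^ 2 := by
      rw [hc2def]; field_simp; ring
    calc c2 * (ε * (Lr + 1))
        ≤ c2 * (γ ^ 2 * δ ^ 2 / (64 * (M + 1) ^ 2 * (Lr + 1)) * (Lr + 1)) := by
          have h1 : ε * (Lr + 1) ≤ γ ^ 2 * δ ^ 2 / (64 * (M + 1) ^ 2 * (Lr + 1)) * (Lr + 1) := by
            have : (0:ℝ) < Lr + 1 := by linarith
            nlinarith
          exact mul_le_mul_of_nonneg_left h1 hc20
    _ = (δ / 4) ^ 2 := hkey
  have hn5 : n5 ≤ ENNReal.ofReal (δ / 2) := by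
    have h2 : n5 ^ (2 : ℝ) ≤ ENNReal.ofReal ((δ / 4) ^ 2) + ENNReal.ofReal ((δ / 4) ^ 2) :=
      hn5sq.trans (add_le_add_right hc2A _)
    have h3 : (n5 ^ (2 : ℝ)) ^ ((2 : ℝ)⁻¹) = n5 := by
      rw [← ENNReal.rpow_mul, mul_inv_cancel₀ (by norm_num : (2:ℝ) ≠ 0), ENNReal.rpow_one]
    rw [← h3]
    have h4 : (ENNReal.ofReal ((δ / 4) ^ 2)) ^ ((2 : ℝ)⁻¹) = ENNReal.ofReal (δ / 4) := by
      rw [ofReal_sq (by linarith), ← ENNReal.rpow_mul,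
        mul_inv_cancel₀ (by norm_num : (2:ℝ) ≠ 0), ENNReal.rpow_one]
    calc (n5 ^ (2 : ℝ)) ^ ((2 : ℝ)⁻¹)
        ≤ (ENNReal.ofReal ((δ / 4) ^ 2) + ENNReal.ofReal ((δ / 4) ^ 2)) ^ ((2 : ℝ)⁻¹) :=
          ENNReal.rpow_le_rpow h2 (by norm_num)
    _ ≤ (ENNReal.ofReal ((δ / 4) ^ 2)) ^ ((2 : ℝ)⁻¹)
          + (ENNReal.ofReal ((δ / 4) ^ 2)) ^ ((2 : ℝ)⁻¹) :=
          ENNReal.rpow_add_le_add_rpow _ _ (by norm_num) (by norm_num)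
    _ = ENNReal.ofReal (δ / 2) := by
          rw [h4, ← ENNReal.ofReal_add (by linarith) (by linarith),
            show δ / 4 + δ / 4 = δ / 2 by ring]
  -- triangle inequalities
  have mw2 : AEStronglyMeasurable (fun q : (E × E) × (E × E) => T₀ q.1.1 - T₁ q.2.1) η :=
    ((hm₀.comp mq11).sub (hm₁.comp mq21)).aestronglyMeasurable
  have mw3 : AEStronglyMeasurable (fun q : (E × E) × (E × E) => T₁ q.2.1 - T₁ q.1.1) η :=
    ((hm₁.comp mq21).sub (hm₁.comp mq11)).aestronglyMeasurable
  have mw4 : AEStronglyMeasurable (fun q : (E × E) × (E × E) => T₁ q.2.1 - g q.2.1) η :=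
    ((hm₁.comp mq21).sub (mgm.comp mq21)).aestronglyMeasurable
  have mw5 : AEStronglyMeasurable (fun q : (E × E) × (E × E) => g q.2.1 - g q.1.1) η :=
    ((mgm.comp mq21).sub (mgm.comp mq11)).aestronglyMeasurable
  have mw6 : AEStronglyMeasurable (fun q : (E × E) × (E × E) => g q.1.1 - T₁ q.1.1) η :=
    ((mgm.comp mq11).sub (hm₁.comp mq11)).aestronglyMeasurable
  have h123 : n1 ≤ n2 + n3 := by
    rw [hn1def, hn2def, hn3def]
    have he : (fun q : (E × E) × (E × E) => T₀ q.1.1 - T₁ q.1.1)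
        = (fun q : (E × E) × (E × E) => T₀ q.1.1 - T₁ q.2.1)
          + fun q : (E × E) × (E × E) => T₁ q.2.1 - T₁ q.1.1 := by
      funext q; show _ = (T₀ q.1.1 - T₁ q.2.1) + (T₁ q.2.1 - T₁ q.1.1); abel
    rw [he]
    exact eLpNorm_add_le mw2 mw3 one_le_two
  have h3456 : n3 ≤ n4 + n5 + n6 := by
    rw [hn3def, hn4def, hn5def, hn6def]
    have he : (fun q : (E × E) × (E × E) => T₁ q.2.1 - T₁ q.1.1)
        = (fun q : (E × E) × (E × E) => T₁ q.2.1 - g q.2.1)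
          + ((fun q : (E × E) × (E × E) => g q.2.1 - g q.1.1)
            + fun q : (E × E) × (E × E) => g q.1.1 - T₁ q.1.1) := by
      funext q
      show _ = (T₁ q.2.1 - g q.2.1) + ((g q.2.1 - g q.1.1) + (g q.1.1 - T₁ q.1.1))
      abel
    rw [he]
    refine (eLpNorm_add_le mw4 (mw5.add mw6) one_le_two).trans ?_
    rw [add_assoc]
    exact add_le_add_right (eLpNorm_add_le mw5 mw6 one_le_two) _
  -- assemble the chain
  have hchain : ENNReal.ofReal sL ≤ n2 + ENNReal.ofReal δ := by
    have hsum : ENNReal.ofReal (δ / 4) + ENNReal.ofReal (δ / 2) + ENNReal.ofReal (δ / 4)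
        = ENNReal.ofReal δ := by
      rw [← ENNReal.ofReal_add (by linarith) (by linarith),
        ← ENNReal.ofReal_add (by linarith) (by linarith),
        show δ / 4 + δ / 2 + δ / 4 = δ by ring]
    calc ENNReal.ofReal sL = n1 := hn1.symm
    _ ≤ n2 + n3 := h123
    _ ≤ n2 + (n4 + n5 + n6) := add_le_add_right h3456 _
    _ ≤ n2 + (ENNReal.ofReal (δ / 4) + ENNReal.ofReal (δ / 2) + ENNReal.ofReal (δ / 4)) := by
        gcongr
    _ = n2 + ENNReal.ofReal δ := by rw [hsum]
  have hn2ge : ENNReal.ofReal (sL - δ) ≤ n2 := by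
    rw [ENNReal.ofReal_sub _ hδ.le]
    exact tsub_le_iff_right.2 hchain
  have hB : ENNReal.ofReal ((sL - δ) ^ 2) ≤ B := by
    rw [ofReal_sq (by linarith)]
    calc ENNReal.ofReal (sL - δ) ^ (2 : ℝ) ≤ n2 ^ (2 : ℝ) :=
      ENNReal.rpow_le_rpow hn2ge (by norm_num)
    _ = B := e2
  calc ENNReal.ofReal ε * ENNReal.ofReal ((sL - δ) ^ 2)
      ≤ ENNReal.ofReal ε * B := mul_le_mul_right hB _
  _ ≤ A + ENNReal.ofReal ε * B := le_add_self

end Euclid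

/-- As `ε → 0⁺`, `ε⁻¹ τ_{c_ε}(γ₀, γ₁) → ‖T₀ - T₁‖²_{L²(ρ)}`. -/
theorem tauEps_tendsto {d : ℕ}
    (ρ μ₀ μ₁ : Measure (EuclideanSpace ℝ (Fin d)))
    [IsProbabilityMeasure ρ] [IsProbabilityMeasure μ₀] [IsProbabilityMeasure μ₁]
    (hρc : IsCompact (msupport ρ)) (hμ₀c : IsCompact (msupport μ₀))
    (hμ₁c : IsCompact (msupport μ₁))
    (T₀ T₁ : EuclideanSpace ℝ (Fin d) → EuclideanSpace ℝ (Fin d))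
    (hm₀ : Measurable T₀) (hm₁ : Measurable T₁)
    (hp₀ : Measure.map T₀ ρ = μ₀) (hp₁ : Measure.map T₁ ρ = μ₁)
    -- `T₀`, `T₁` are the optimal quadratic-cost maps: the induced plans are optimal
    (hopt₀ : ∀ η : Measure (EuclideanSpace ℝ (Fin d) × EuclideanSpace ℝ (Fin d)),
      η.fst = ρ → η.snd = μ₀ →
      ∫⁻ q, ENNReal.ofReal (dist q.1 q.2 ^ 2) ∂(Measure.map (fun x => (x, T₀ x)) ρ)
        ≤ ∫⁻ q, ENNReal.ofReal (dist q.1 q.2 ^ 2) ∂η)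
    (hopt₁ : ∀ η : Measure (EuclideanSpace ℝ (Fin d) × EuclideanSpace ℝ (Fin d)),
      η.fst = ρ → η.snd = μ₁ →
      ∫⁻ q, ENNReal.ofReal (dist q.1 q.2 ^ 2) ∂(Measure.map (fun x => (x, T₁ x)) ρ)
        ≤ ∫⁻ q, ENNReal.ofReal (dist q.1 q.2 ^ 2) ∂η) :
    Tendsto (fun ε : ℝ => tauEps ρ T₀ T₁ ε / ENNReal.ofReal ε)
      (nhdsWithin 0 (Set.Ioi 0))
      (nhds (∫⁻ x, ENNReal.ofReal (dist (T₀ x) (T₁ x) ^ 2) ∂ρ)) := by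
  obtain ⟨R₀, hR₀0, hae₀⟩ := ae_norm_le ρ μ₀ hμ₀c T₀ hm₀ hp₀
  obtain ⟨R₁, hR₁0, hae₁⟩ := ae_norm_le ρ μ₁ hμ₁c T₁ hm₁ hp₁
  have hLtop : (∫⁻ x, ENNReal.ofReal (dist (T₀ x) (T₁ x) ^ 2) ∂ρ) ≠ ⊤ := by
    have hb : ∀ᵐ x ∂ρ, ENNReal.ofReal (dist (T₀ x) (T₁ x) ^ 2)
        ≤ ENNReal.ofReal ((R₀ + R₁) ^ 2) := by
      filter_upwards [hae₀, hae₁] with x h0 h1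
      apply ENNReal.ofReal_le_ofReal
      have hd : dist (T₀ x) (T₁ x) ≤ R₀ + R₁ :=
        (dist_le_norm_add_norm _ _).trans (add_le_add h0 h1)
      exact pow_le_pow_left₀ dist_nonneg hd 2
    have hle := lintegral_mono_ae hb
    rw [lintegral_const] at hle
    exact ne_top_of_le_ne_top (ENNReal.mul_ne_top ENNReal.ofReal_ne_top (measure_ne_top ρ _)) hle
  have hT₁2 : MemLp T₁ 2 ρ := MemLp.of_bound hm₁.aestronglyMeasurable R₁ hae₁
  set L := ∫⁻ x, ENNReal.ofReal (dist (T₀ x) (T₁ x) ^ 2) ∂ρ with hLdef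
  set Lr := L.toReal with hLrdef
  refine tendsto_order.2 ⟨?_, ?_⟩
  · intro c hc
    have hctop : c ≠ ⊤ := (hc.trans_le le_top).ne
    have hcLr : c.toReal < Lr := (ENNReal.toReal_lt_toReal hctop hLtop).2 hc
    have hct0 : 0 ≤ c.toReal := ENNReal.toReal_nonneg
    have hsq : Real.sqrt c.toReal < Real.sqrt Lr := Real.sqrt_lt_sqrt hct0 hcLr
    set δ := (Real.sqrt Lr - Real.sqrt c.toReal) / 2 with hδdef
    have hδ0 : 0 < δ := by rw [hδdef]; linarith
    have hδle : δ ≤ Real.sqrt Lr := by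
      have := Real.sqrt_nonneg c.toReal
      rw [hδdef]; linarith
    obtain ⟨ε₀, hε₀, hkey⟩ := tau_lower ρ T₀ T₁ hm₀ hm₁ hT₁2 hLtop hδ0 hδle
    filter_upwards [Ioc_mem_nhdsGT_of_mem (Set.left_mem_Ico.2 hε₀)] with ε hε
    have h1 := hkey ε hε.1 hε.2
    have h2 : ENNReal.ofReal ((Real.sqrt Lr - δ) ^ 2)
        ≤ tauEps ρ T₀ T₁ ε / ENNReal.ofReal ε := by
      rw [ENNReal.le_div_iff_mul_le (Or.inl (ENNReal.ofReal_pos.2 hε.1).ne')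
        (Or.inl ENNReal.ofReal_ne_top), mul_comm]
      exact h1
    refine lt_of_lt_of_le ?_ h2
    have h3 : c.toReal < (Real.sqrt Lr - δ) ^ 2 := by
      have hv : Real.sqrt c.toReal < Real.sqrt Lr - δ := by rw [hδdef]; linarith
      calc c.toReal = Real.sqrt c.toReal ^ 2 := (Real.sq_sqrt hct0).symm
      _ < (Real.sqrt Lr - δ) ^ 2 := by
          apply pow_lt_pow_left₀ hv (Real.sqrt_nonneg _) (by norm_num)
    calc c = ENNReal.ofReal c.toReal := (ENNReal.ofReal_toReal hctop).symm
    _ < ENNReal.ofReal ((Real.sqrt Lr - δ) ^ 2) :=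
        (ENNReal.ofReal_lt_ofReal_iff (lt_of_le_of_lt hct0 h3)).2 h3
  · intro c hc
    filter_upwards [self_mem_nhdsWithin] with ε hε
    have hεpos : (0:ℝ) < ε := hε
    have hle : tauEps ρ T₀ T₁ ε / ENNReal.ofReal ε ≤ L :=
      ENNReal.div_le_of_le_mul (by
        rw [mul_comm]
        exact tau_upper ρ T₀ T₁ hm₀ hm₁ hεpos)
    exact lt_of_le_of_lt hle hc
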